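/- Let P be a probability measure on a finite set X and Q an n-type on X. Then (n+1)^{-|X|} · 2^{-n D(Q‖P)} ≤ P^{⊗n}(T^n(Q)) ≤ 2^{-n D(Q‖P)}, where T^n(Q) is the type class of Q and D(Q‖P) is the relative entropy (with the convention D(Q‖P) = ∞ if supp Q ⊄ supp P). -/

import Mathlib

open Finset

private lemma tcp_fact_aux (c d : ℕ) : (c + d).factorial ≤ c.factorial * (c + d) ^ d := by
  induction d with
  | zero => simp
  | succ d ih =>
    have h1 : (c + (d + 1)).factorial = (c + d + 1) * (c + d).factorial := by
      rw [← Nat.add_assoc]; exact Nat.factorial_succ _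
    calc (c + (d + 1)).factorial = (c + d + 1) * (c + d).factorial := h1
      _ ≤ (c + d + 1) * (c.factorial * (c + d) ^ d) := Nat.mul_le_mul_left _ ih
      _ ≤ (c + d + 1) * (c.factorial * (c + d + 1) ^ d) := by
          exact Nat.mul_le_mul_left _ (Nat.mul_le_mul_left _ (Nat.pow_le_pow_left (Nat.le_succ _) d))
      _ = c.factorial * (c + (d + 1)) ^ (d + 1) := by ring
  
private lemma tcp_fact_pow_le (k c : ℕ) : k.factorial * k ^ c ≤ c.factorial * k ^ k := by
  rcases le_total c k with h | h
  · obtain ⟨d, rfl⟩ := Nat.exists_eq_add_of_le h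
    calc (c + d).factorial * (c + d) ^ c ≤ (c.factorial * (c + d) ^ d) * (c + d) ^ c :=
          Nat.mul_le_mul_right _ (tcp_fact_aux c d)
      _ = c.factorial * (c + d) ^ (c + d) := by rw [mul_assoc, ← pow_add, add_comm d c]
  · obtain ⟨d, rfl⟩ := Nat.exists_eq_add_of_le h
    have h1 : k.factorial * k ^ d ≤ (k + d).factorial :=
      le_trans (Nat.mul_le_mul_left _ (Nat.pow_le_pow_left (Nat.le_succ k) d))
        Nat.factorial_mul_pow_le_factorial
    calc k.factorial * k ^ (k + d) = (k.factorial * k ^ d) * k ^ k := by rw [pow_add]; ring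
      _ ≤ (k + d).factorial * k ^ k := Nat.mul_le_mul_right _ h1


section Counting
variable {Z : Type*} [Fintype Z] [DecidableEq Z]

/-- Strings with prescribed letter counts. -/
def tcpCntSet (n : ℕ) (c : Z → ℕ) : Finset (Fin n → Z) :=
  univ.filter fun x => ∀ z, (univ.filter fun i => x i = z).card = c z

lemma tcp_mem_cntSet {n : ℕ} {c : Z → ℕ} {x : Fin n → Z} :
    x ∈ tcpCntSet n c ↔ ∀ z, (univ.filter fun i => x i = z).card = c z := by
  simp [tcpCntSet]

lemma tcp_sum_counts {n : ℕ} (x : Fin n → Z) :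
    ∑ z, (univ.filter fun i => x i = z).card = n := by
  have := Finset.card_eq_sum_card_fiberwise (s := (univ : Finset (Fin n)))
    (t := (univ : Finset Z)) (f := x) (fun i _ => mem_univ _)
  simpa using this.symm

lemma tcp_prod_eq_pow {n : ℕ} (P : Z → ℝ) {c : Z → ℕ} {x : Fin n → Z}
    (hx : x ∈ tcpCntSet n c) : ∏ i, P (x i) = ∏ z, P z ^ c z := by
  rw [← Finset.prod_fiberwise univ x (fun i => P (x i))]
  refine Finset.prod_congr rfl fun z _ => ?_
  calc ∏ i ∈ univ.filter (fun i => x i = z), P (x i)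
      = ∏ i ∈ univ.filter (fun i => x i = z), P z :=
        Finset.prod_congr rfl fun i hi => by rw [(Finset.mem_filter.1 hi).2]
    _ = P z ^ c z := by rw [Finset.prod_const, (tcp_mem_cntSet.1 hx) z]

lemma tcp_cntSet_sum {n : ℕ} {c : Z → ℕ} (h : (tcpCntSet n c).Nonempty) : ∑ z, c z = n := by
  obtain ⟨x, hx⟩ := h
  rw [← tcp_sum_counts x]
  exact Finset.sum_congr rfl fun z _ => ((tcp_mem_cntSet.1 hx) z).symm

/-- Fiber of `Sigma.fst`. -/
private def tcpFstFiber {F : Z → Type*} (z : Z) : {p : Σ z', F z' // p.1 = z} ≃ F z where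
  toFun p := p.2 ▸ p.1.2
  invFun x := ⟨⟨z, x⟩, rfl⟩
  left_inv := by rintro ⟨⟨z', x⟩, rfl⟩; rfl
  right_inv x := rfl

lemma tcp_exists_mem_cntSet {n : ℕ} {c : Z → ℕ} (hc : ∑ z, c z = n) :
    (tcpCntSet n c).Nonempty := by
  have hcard : Fintype.card (Σ z, Fin (c z)) = Fintype.card (Fin n) := by simp [hc]
  let e : (Σ z, Fin (c z)) ≃ Fin n := Fintype.equivOfCardEq hcard
  refine ⟨fun i => (e.symm i).1, tcp_mem_cntSet.2 fun z => ?_⟩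
  rw [← Fintype.card_subtype]
  calc Fintype.card {i : Fin n // (e.symm i).1 = z}
      = Fintype.card {p : Σ z', Fin (c z') // p.1 = z} :=
        (Fintype.card_congr (Equiv.subtypeEquiv e (fun p => by simp))).symm
    _ = c z := by rw [Fintype.card_congr (tcpFstFiber z), Fintype.card_fin]

omit [Fintype Z] in
private lemma tcp_card_filter_comp {n : ℕ} (σ : Equiv.Perm (Fin n)) (t : Fin n → Z) (z : Z) :
    (univ.filter fun i => t (σ i) = z).card = (univ.filter fun i => t i = z).card := by
  apply Finset.card_bij (fun i _ => σ i)
  · intro a ha; simp only [mem_filter, mem_univ, true_and] at ha ⊢; exact ha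
  · intro a _ b _ h; exact σ.injective h
  · intro b hb
    refine ⟨σ.symm b, ?_, by simp⟩
    simp only [mem_filter, mem_univ, true_and] at hb ⊢
    simpa using hb

lemma tcp_card_cntSet_mul {n : ℕ} {c : Z → ℕ} (hc : ∑ z, c z = n) :
    (tcpCntSet n c).card * ∏ z, (c z).factorial = n.factorial := by
  obtain ⟨t₀, ht₀⟩ := tcp_exists_mem_cntSet hc
  have hmap : ∀ σ : Equiv.Perm (Fin n), t₀ ∘ ⇑σ ∈ tcpCntSet n c := by
    intro σ
    refine tcp_mem_cntSet.2 fun z => ?_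
    rw [show (univ.filter fun i => (t₀ ∘ ⇑σ) i = z) = (univ.filter fun i => t₀ (σ i) = z) from rfl,
      tcp_card_filter_comp σ t₀ z]
    exact (tcp_mem_cntSet.1 ht₀) z
  have hfib : ∀ t ∈ tcpCntSet n c,
      (univ.filter fun σ : Equiv.Perm (Fin n) => t₀ ∘ ⇑σ = t).card = ∏ z, (c z).factorial := by
    intro t ht
    have hcard : ∀ z, Fintype.card {i // t i = z} = Fintype.card {i // t₀ i = z} := fun z => by
      rw [Fintype.card_subtype, Fintype.card_subtype, (tcp_mem_cntSet.1 ht) z,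
        (tcp_mem_cntSet.1 ht₀) z]
    let σ₀ : Fin n ≃ Fin n := Equiv.ofFiberEquiv (f := t) (g := t₀)
      (fun z => Fintype.equivOfCardEq (hcard z))
    have hσ₀ : ∀ i, t₀ (σ₀ i) = t i := fun i => Equiv.ofFiberEquiv_map _ i
    have ht' : ∀ x, t (σ₀.symm x) = t₀ x := fun x => by
      rw [← hσ₀ (σ₀.symm x), Equiv.apply_symm_apply]
    have hEq : (univ.filter fun σ : Equiv.Perm (Fin n) => t₀ ∘ ⇑σ = t).card
        = Fintype.card {g : Equiv.Perm (Fin n) // t ∘ ⇑g = t} := by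
      rw [← Fintype.card_subtype]
      apply Fintype.card_congr
      refine Equiv.subtypeEquiv (Equiv.mulLeft σ₀⁻¹) fun σ => ?_
      simp only [funext_iff, Function.comp_apply]
      have hml : ∀ (τ : Equiv.Perm (Fin n)) (i : Fin n),
          ((Equiv.mulLeft σ₀⁻¹) τ) i = σ₀.symm (τ i) := fun _ _ => rfl
      constructor
      · intro h i; rw [hml, ht', h]
      · intro h i; have h2 := h i; rw [hml, ht'] at h2; exact h2
    rw [hEq, DomMulAct.stabilizer_card t]
    exact Finset.prod_congr rfl fun z _ => by
      rw [Fintype.card_subtype, (tcp_mem_cntSet.1 ht) z]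
  have hkey := Finset.card_eq_sum_card_fiberwise (s := (univ : Finset (Equiv.Perm (Fin n))))
    (t := tcpCntSet n c) (f := fun σ : Equiv.Perm (Fin n) => t₀ ∘ ⇑σ) (fun σ _ => hmap σ)
  rw [Finset.sum_congr rfl hfib, Finset.sum_const, smul_eq_mul] at hkey
  rw [← hkey, card_univ, Fintype.card_perm, Fintype.card_fin]

end Counting


/-- `Q` is an `n`-type: every probability is a multiple of `1/n`. -/
def IsNType {Z : Type*} (n : ℕ) (Q : Z → ℝ) : Prop :=
  ∀ z, ∃ k : ℕ, Q z = (k : ℝ) / n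

/-- The type class of `Q`: strings of length `n` with empirical distribution `Q`. -/
def typeClass {Z : Type*} [Fintype Z] [DecidableEq Z] (n : ℕ) (Q : Z → ℝ) :
    Set (Fin n → Z) :=
  {s | ∀ z, ((Finset.univ.filter fun i => s i = z).card : ℝ) = n * Q z}

open Classical in
/-- The probability of the type class `T^n(Q)` under the product measure `P^{⊗n}`. -/
noncomputable def typeClassProb {Z : Type*} [Fintype Z] [DecidableEq Z] (n : ℕ)
    (P Q : Z → ℝ) : ℝ :=
  ∑ s ∈ Finset.univ.filter (fun s : Fin n → Z => s ∈ typeClass n Q), ∏ i, P (s i)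

open Classical in
/-- The relative entropy `D(Q‖P)` (base 2), assuming `supp Q ⊆ supp P`. -/
noncomputable def relEnt {Z : Type*} [Fintype Z] (P Q : Z → ℝ) : ℝ :=
  ∑ z ∈ Finset.univ.filter (fun z => Q z ≠ 0), Q z * Real.logb 2 (Q z / P z)

/-- For a probability measure `P` on a finite set and an `n`-type `Q`:
`(n+1)^{-|X|} 2^{-n D(Q‖P)} ≤ P^{⊗n}(T^n(Q)) ≤ 2^{-n D(Q‖P)}`, with the convention
`D(Q‖P) = ∞` (so that both bounds read `P^{⊗n}(T^n(Q)) = 0`) when `supp Q ⊄ supp P`. -/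
theorem typeClassProb_bounds {Z : Type*} [Fintype Z] [DecidableEq Z] (n : ℕ) (hn : 0 < n)
    (P Q : Z → ℝ) (hP0 : ∀ z, 0 ≤ P z) (hPsum : ∑ z, P z = 1)
    (hQ0 : ∀ z, 0 ≤ Q z) (hQsum : ∑ z, Q z = 1) (hQtype : IsNType n Q) :
    ((∀ z, Q z ≠ 0 → P z ≠ 0) →
      (1 / ((n + 1 : ℝ) ^ Fintype.card Z)) * (2 : ℝ) ^ (-((n : ℝ) * relEnt P Q)) ≤
          typeClassProb n P Q ∧
        typeClassProb n P Q ≤ (2 : ℝ) ^ (-((n : ℝ) * relEnt P Q))) ∧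
    ((¬ ∀ z, Q z ≠ 0 → P z ≠ 0) → typeClassProb n P Q = 0) := by
  classical
  set k : Z → ℕ := fun z => Classical.choose (hQtype z) with hkdef
  have hk : ∀ z, Q z = (k z : ℝ) / n := fun z => Classical.choose_spec (hQtype z)
  have hnR : (0:ℝ) < n := by exact_mod_cast hn
  have hkQ : ∀ z, (k z : ℝ) = n * Q z := fun z => by
    rw [hk z]; field_simp
  have hksum : ∑ z, k z = n := by
    have h1 : ((∑ z, k z : ℕ) : ℝ) = (n : ℝ) := by
      push_cast
      rw [Finset.sum_congr rfl fun z _ => hkQ z, ← Finset.mul_sum, hQsum, mul_one]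
    exact_mod_cast h1
  have hTC : ∀ P' : Z → ℝ, typeClassProb n P' Q = ∑ x ∈ tcpCntSet n k, ∏ i, P' (x i) := by
    intro P'
    simp only [typeClassProb]
    refine Finset.sum_congr ?_ fun _ _ => rfl
    ext x
    simp only [Finset.mem_filter, Finset.mem_univ, true_and, typeClass, Set.mem_setOf_eq,
      tcp_mem_cntSet]
    refine forall_congr' fun z => ?_
    rw [← hkQ z]
    exact ⟨fun h => Nat.cast_injective h, fun h => by rw [h]⟩
  have hPk : ∀ P' : Z → ℝ,
      typeClassProb n P' Q = ((tcpCntSet n k).card : ℝ) * ∏ z, P' z ^ k z := by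
    intro P'
    rw [hTC P', Finset.sum_congr rfl (fun x hx => tcp_prod_eq_pow P' hx), Finset.sum_const,
      nsmul_eq_mul]
  -- Part 2
  have part2 : (¬ ∀ z, Q z ≠ 0 → P z ≠ 0) → typeClassProb n P Q = 0 := by
    intro h
    push_neg at h
    obtain ⟨z₀, hQz₀, hPz₀⟩ := h
    rw [hTC P]
    refine Finset.sum_eq_zero fun x hx => ?_
    have hcard : (univ.filter fun i => x i = z₀).card = k z₀ := tcp_mem_cntSet.1 hx z₀
    have hk0 : k z₀ ≠ 0 := by
      intro h0
      apply hQz₀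
      rw [hk z₀, h0]; simp
    have hne : (univ.filter fun i => x i = z₀).Nonempty := by
      rw [← Finset.card_pos, hcard]; omega
    obtain ⟨i, hi⟩ := hne
    exact Finset.prod_eq_zero (Finset.mem_univ i) (by rw [(Finset.mem_filter.1 hi).2, hPz₀])
  have hQprod_nonneg : (0:ℝ) ≤ ∏ z, Q z ^ k z :=
    Finset.prod_nonneg fun z _ => pow_nonneg (hQ0 z) _
  have hTle1 : typeClassProb n Q Q ≤ 1 := by
    rw [hTC Q]
    calc ∑ x ∈ tcpCntSet n k, ∏ i, Q (x i)
        ≤ ∑ x : Fin n → Z, ∏ i, Q (x i) :=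
          Finset.sum_le_sum_of_subset_of_nonneg (Finset.subset_univ _)
            (fun x _ _ => Finset.prod_nonneg fun i _ => hQ0 _)
      _ = (∑ z, Q z) ^ n := (Fintype.sum_pow Q n).symm
      _ = 1 := by rw [hQsum, one_pow]
  -- comparison with any count vector
  have hcnt_le : ∀ c : Z → ℕ,
      ((tcpCntSet n c).card : ℝ) * ∏ z, Q z ^ c z ≤ typeClassProb n Q Q := by
    intro c
    rw [hPk Q]
    rcases Finset.eq_empty_or_nonempty (tcpCntSet n c) with hE | hNE
    · rw [hE, Finset.card_empty, Nat.cast_zero, zero_mul]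
      exact mul_nonneg (Nat.cast_nonneg _) hQprod_nonneg
    · have hcsum := tcp_cntSet_sum hNE
      have hQpow : ∀ (d : Z → ℕ), (∑ z, d z = n) →
          ∏ z, Q z ^ d z = (∏ z, (k z : ℝ) ^ d z) / (n : ℝ) ^ n := by
        intro d hd
        calc ∏ z, Q z ^ d z = ∏ z, ((k z : ℝ) ^ d z / (n : ℝ) ^ d z) :=
              Finset.prod_congr rfl fun z _ => by rw [hk z, div_pow]
          _ = (∏ z, (k z : ℝ) ^ d z) / ∏ z, (n : ℝ) ^ d z := Finset.prod_div_distrib _ _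
          _ = (∏ z, (k z : ℝ) ^ d z) / (n : ℝ) ^ n := by
              rw [Finset.prod_pow_eq_pow_sum, hd]
      rw [hQpow c hcsum, hQpow k hksum, ← mul_div_assoc, ← mul_div_assoc]
      have hnat : (tcpCntSet n c).card * ∏ z, k z ^ c z
          ≤ (tcpCntSet n k).card * ∏ z, k z ^ k z := by
        have e1 := tcp_card_cntSet_mul hcsum
        have e2 := tcp_card_cntSet_mul (c := k) hksum
        have hfac : ∏ z, ((k z).factorial * k z ^ c z) ≤ ∏ z, ((c z).factorial * k z ^ k z) :=
          Finset.prod_le_prod' fun z _ => tcp_fact_pow_le (k z) (c z)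
        have hM : 0 < (∏ z, (c z).factorial) * ∏ z, (k z).factorial :=
          Nat.mul_pos (Finset.prod_pos fun z _ => Nat.factorial_pos _)
            (Finset.prod_pos fun z _ => Nat.factorial_pos _)
        refine Nat.le_of_mul_le_mul_right ?_ hM
        calc ((tcpCntSet n c).card * ∏ z, k z ^ c z) * ((∏ z, (c z).factorial) * ∏ z, (k z).factorial)
            = ((tcpCntSet n c).card * ∏ z, (c z).factorial)
                * ((∏ z, (k z).factorial) * ∏ z, k z ^ c z) := by ring
          _ = n.factorial * ∏ z, ((k z).factorial * k z ^ c z) := by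
              rw [e1, Finset.prod_mul_distrib]
          _ ≤ n.factorial * ∏ z, ((c z).factorial * k z ^ k z) :=
              Nat.mul_le_mul_left _ hfac
          _ = (n.factorial * ∏ z, (c z).factorial) * ∏ z, k z ^ k z := by
              rw [Finset.prod_mul_distrib]; ring
          _ = ((tcpCntSet n k).card * ∏ z, k z ^ k z)
                * ((∏ z, (c z).factorial) * ∏ z, (k z).factorial) := by
              rw [← e2]; ring
      have hreal : ((tcpCntSet n c).card : ℝ) * ∏ z, (k z : ℝ) ^ c z
          ≤ ((tcpCntSet n k).card : ℝ) * ∏ z, (k z : ℝ) ^ k z := by exact_mod_cast hnat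
      exact div_le_div_of_nonneg_right hreal (by positivity)
  -- lower bound for own-type probability
  have hlowT : 1 ≤ ((n : ℝ) + 1) ^ Fintype.card Z * typeClassProb n Q Q := by
    set B := Fintype.piFinset (fun _ : Z => Finset.range (n+1)) with hB
    have hmaps : ∀ x : Fin n → Z, (fun z => (univ.filter fun i => x i = z).card) ∈ B := by
      intro x
      rw [hB, Fintype.mem_piFinset]
      intro z
      rw [Finset.mem_range, Nat.lt_succ_iff]
      calc (univ.filter fun i => x i = z).card ≤ (univ : Finset (Fin n)).card :=
            Finset.card_filter_le _ _
        _ = n := by rw [Finset.card_univ, Fintype.card_fin]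
    have h1 : (1:ℝ) = ∑ c ∈ B, ∑ x ∈ univ.filter
        (fun x : Fin n → Z => (fun z => (univ.filter fun i => x i = z).card) = c),
          ∏ i, Q (x i) := by
      rw [Finset.sum_fiberwise_of_maps_to (fun x _ => hmaps x) (fun x : Fin n → Z => ∏ i, Q (x i)),
        ← Fintype.sum_pow Q n, hQsum, one_pow]
    have h2 : ∀ c ∈ B, (∑ x ∈ univ.filter
        (fun x : Fin n → Z => (fun z => (univ.filter fun i => x i = z).card) = c),
          ∏ i, Q (x i)) ≤ typeClassProb n Q Q := by
      intro c _
      have hEq : univ.filter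
          (fun x : Fin n → Z => (fun z => (univ.filter fun i => x i = z).card) = c)
          = tcpCntSet n c := by
        ext x; simp [tcpCntSet, funext_iff]
      rw [hEq, Finset.sum_congr rfl fun x hx => tcp_prod_eq_pow Q hx, Finset.sum_const,
        nsmul_eq_mul]
      exact hcnt_le c
    have hBcard : B.card = (n + 1) ^ Fintype.card Z := by
      rw [hB, Fintype.card_piFinset]
      simp [Finset.card_range]
    calc (1:ℝ) = ∑ c ∈ B, ∑ x ∈ univ.filter
          (fun x : Fin n → Z => (fun z => (univ.filter fun i => x i = z).card) = c),
            ∏ i, Q (x i) := h1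
      _ ≤ ∑ _c ∈ B, typeClassProb n Q Q := Finset.sum_le_sum h2
      _ = (B.card : ℝ) * typeClassProb n Q Q := by rw [Finset.sum_const, nsmul_eq_mul]
      _ = ((n : ℝ) + 1) ^ Fintype.card Z * typeClassProb n Q Q := by
          rw [hBcard]; push_cast; ring
  refine ⟨fun hsupp => ?_, part2⟩
  have hQpos : ∀ z, Q z ≠ 0 → 0 < Q z := fun z hz => lt_of_le_of_ne (hQ0 z) (Ne.symm hz)
  have hPpos : ∀ z, Q z ≠ 0 → 0 < P z := fun z hz =>
    lt_of_le_of_ne (hP0 z) (Ne.symm (hsupp z hz))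
  have hRe : (2:ℝ) ^ (-((n : ℝ) * relEnt P Q))
      = ∏ z ∈ univ.filter (fun z => Q z ≠ 0), (P z / Q z) ^ k z := by
    have h1 : -((n : ℝ) * relEnt P Q)
        = ∑ z ∈ univ.filter (fun z => Q z ≠ 0), (k z : ℝ) * Real.logb 2 (P z / Q z) := by
      rw [relEnt, Finset.filter_congr_decidable, Finset.mul_sum, ← Finset.sum_neg_distrib]
      refine Finset.sum_congr rfl fun z hz => ?_
      have hz' : Q z ≠ 0 := (Finset.mem_filter.1 hz).2
      rw [show P z / Q z = (Q z / P z)⁻¹ by rw [inv_div], Real.logb_inv, hkQ z]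
      ring
    rw [h1, Real.rpow_sum_of_pos two_pos]
    refine Finset.prod_congr rfl fun z hz => ?_
    have hz' : Q z ≠ 0 := (Finset.mem_filter.1 hz).2
    have hpos : 0 < P z / Q z := div_pos (hPpos z hz') (hQpos z hz')
    rw [mul_comm, Real.rpow_mul (by norm_num : (0:ℝ) ≤ 2),
      Real.rpow_logb two_pos (by norm_num) hpos, Real.rpow_natCast]
  have hcast0 : ∀ z, Q z = 0 → k z = 0 := fun z hz => by
    have h := hkQ z; rw [hz, mul_zero] at h; exact_mod_cast h
  have hprodP : ∏ z, P z ^ k z = ∏ z ∈ univ.filter (fun z => Q z ≠ 0), P z ^ k z :=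
    (Finset.prod_subset (Finset.filter_subset _ _) fun z _ hz => by
      have hz0 : Q z = 0 := by
        by_contra h
        exact hz (Finset.mem_filter.2 ⟨Finset.mem_univ z, h⟩)
      rw [hcast0 z hz0, pow_zero]).symm
  have hprodQ : ∏ z, Q z ^ k z = ∏ z ∈ univ.filter (fun z => Q z ≠ 0), Q z ^ k z :=
    (Finset.prod_subset (Finset.filter_subset _ _) fun z _ hz => by
      have hz0 : Q z = 0 := by
        by_contra h
        exact hz (Finset.mem_filter.2 ⟨Finset.mem_univ z, h⟩)
      rw [hcast0 z hz0, pow_zero]).symm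
  have key : ∏ z, P z ^ k z
      = (2:ℝ) ^ (-((n : ℝ) * relEnt P Q)) * ∏ z, Q z ^ k z := by
    rw [hprodP, hprodQ, hRe, ← Finset.prod_mul_distrib]
    refine Finset.prod_congr rfl fun z hz => ?_
    have hz' : Q z ≠ 0 := (Finset.mem_filter.1 hz).2
    rw [← mul_pow, div_mul_cancel₀ _ hz']
  have hfin : typeClassProb n P Q
      = typeClassProb n Q Q * (2:ℝ) ^ (-((n : ℝ) * relEnt P Q)) := by
    rw [hPk P, hPk Q, key]; ring
  have hRpos : (0:ℝ) < (2:ℝ) ^ (-((n : ℝ) * relEnt P Q)) :=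
    Real.rpow_pos_of_pos two_pos _
  have hA : (0:ℝ) < ((n : ℝ) + 1) ^ Fintype.card Z := by positivity
  constructor
  · have hT : 1 / ((n : ℝ) + 1) ^ Fintype.card Z ≤ typeClassProb n Q Q := by
      rw [div_le_iff₀ hA]
      calc (1:ℝ) ≤ ((n : ℝ) + 1) ^ Fintype.card Z * typeClassProb n Q Q := hlowT
        _ = typeClassProb n Q Q * ((n : ℝ) + 1) ^ Fintype.card Z := mul_comm _ _
    calc 1 / ((n : ℝ) + 1) ^ Fintype.card Z * (2:ℝ) ^ (-((n : ℝ) * relEnt P Q))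
        ≤ typeClassProb n Q Q * (2:ℝ) ^ (-((n : ℝ) * relEnt P Q)) :=
          mul_le_mul_of_nonneg_right hT hRpos.le
      _ = typeClassProb n P Q := hfin.symm
  · rw [hfin]
    calc typeClassProb n Q Q * (2:ℝ) ^ (-((n : ℝ) * relEnt P Q))
        ≤ 1 * (2:ℝ) ^ (-((n : ℝ) * relEnt P Q)) :=
          mul_le_mul_of_nonneg_right hTle1 hRpos.le
      _ = _ := one_mul _
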